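/- Let H be an n×n real symmetric matrix, let v ∈ ℝⁿ be an eigenvector of H with Hv = λv for some λ < 0, and suppose μ ∈ ℝ satisfies μ ≠ 0 and μ² - (1 + β - αλ)μ + β = 0. Then the vector (v, (1/μ)v) ∈ ℝ²ⁿ is an eigenvector of the block matrix A = [[(1+β)Iₙ - αH, -βIₙ], [Iₙ, 0]] with eigenvalue μ, i.e. A(v, (1/μ)v) = μ·(v, (1/μ)v). -/

import Mathlib

open Matrix

/-- Let `H` be an `n×n` real symmetric matrix, `v` an eigenvector of `H`
with `Hv = λv` for some `λ < 0`, and suppose `μ ≠ 0` satisfies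
`μ² - (1 + β - αλ)μ + β = 0`. Then `(v, (1/μ)v)` is an eigenvector of
`A = [[(1+β)Iₙ - αH, -βIₙ], [Iₙ, 0]]` with eigenvalue `μ`. -/
theorem stmt_6 (n : ℕ) (H : Matrix (Fin n) (Fin n) ℝ) (hH : H.IsSymm)
    (α β lam : ℝ) (hlam : lam < 0)
    (v : Fin n → ℝ) (hv : v ≠ 0) (heig : H.mulVec v = lam • v)
    (μ : ℝ) (hμ : μ ≠ 0) (hroot : μ ^ 2 - (1 + β - α * lam) * μ + β = 0)
    (A : Matrix (Fin n ⊕ Fin n) (Fin n ⊕ Fin n) ℝ)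
    (hA : A = Matrix.fromBlocks ((1 + β) • (1 : Matrix (Fin n) (Fin n) ℝ) - α • H)
      (-(β • (1 : Matrix (Fin n) (Fin n) ℝ))) (1 : Matrix (Fin n) (Fin n) ℝ) 0) :
    A.mulVec (Sum.elim v (μ⁻¹ • v)) = μ • Sum.elim v (μ⁻¹ • v) ∧
      Sum.elim v (μ⁻¹ • v) ≠ 0 := by
  constructor
  · subst hA
    rw [fromBlocks_mulVec]
    funext i
    cases i with
    | inl i =>
      simp only [Sum.elim_inl, sub_mulVec, smul_mulVec, one_mulVec, neg_mulVec,
        heig, zero_mulVec, Pi.add_apply, Pi.sub_apply, Pi.smul_apply, Pi.neg_apply,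
        smul_eq_mul, Sum.elim_comp_inl, Sum.elim_comp_inr]
      have hkey : (1 + β) - α * lam - β * μ⁻¹ = μ := by
        field_simp
        nlinarith [hroot]
      nlinarith [congrArg (· * v i) hkey]
    | inr i =>
      simp only [Sum.elim_inr, one_mulVec, zero_mulVec, Pi.add_apply, Pi.smul_apply, Pi.zero_apply, add_zero,
        smul_eq_mul, Sum.elim_comp_inl, Sum.elim_comp_inr]
      field_simp
  · intro h
    apply hv
    funext i
    have := congrFun h (Sum.inl i)
    simpa using this
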